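/- Let s, s' : Fin N → S. If the empirical measures of s and s' coincide, i.e. ∑_{i=1}^N δ_{s_i} = ∑_{i=1}^N δ_{s'_i} as measures on S, then there exists a permutation σ of Fin N such that s'_i = s_{σ(i)} for all i ∈ Fin N. -/

import Mathlib

open MeasureTheory

/-- if the empirical measures `∑_{i} δ_{s_i}` and `∑_{i} δ_{s'_i}` of two
vectors `s, s' : Fin N → S` coincide as measures on `S`, then `s'` is a permutation
of `s`. -/
theorem statement2
    {S : Type*} [MeasurableSpace S] [MeasurableSingletonClass S]
    {N : ℕ} (hN : 1 ≤ N) (s s' : Fin N → S)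
    (h : (∑ i : Fin N, Measure.dirac (s i)) = ∑ i : Fin N, Measure.dirac (s' i)) :
    ∃ σ : Equiv.Perm (Fin N), ∀ i : Fin N, s' i = s (σ i) := by
  classical
  -- counts equal
  have hcount : ∀ x : S, (Finset.univ.filter (fun i => s i = x)).card
      = (Finset.univ.filter (fun i => s' i = x)).card := by
    intro x
    have := congrFun (congrArg (fun μ : Measure S => (μ : Set S → ENNReal)) h) {x}
    simp only [Measure.coe_finset_sum, Finset.sum_apply,
      Measure.dirac_apply' _ (measurableSet_singleton x)] at this
    have h1 : ∀ (f : Fin N → S),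
        (∑ i : Fin N, Set.indicator {x} (1 : S → ENNReal) (f i))
        = ((Finset.univ.filter (fun i => f i = x)).card : ENNReal) := by
      intro f
      rw [Finset.card_filter]
      push_cast
      refine Finset.sum_congr rfl fun i _ => ?_
      by_cases hx : f i = x <;> simp [Set.indicator, hx]
    rw [h1 s, h1 s'] at this
    exact_mod_cast this
  -- multiset equality
  have hms : Multiset.map s Finset.univ.val = Multiset.map s' Finset.univ.val := by
    ext x
    rw [Multiset.count_map, Multiset.count_map]
    have e : ∀ (f : Fin N → S), (Multiset.filter (fun a => x = f a) Finset.univ.val).card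
        = (Finset.univ.filter (fun i => f i = x)).card := by
      intro f
      rw [show (Finset.univ.filter (fun i => f i = x)).card
          = (Multiset.filter (fun i => f i = x) Finset.univ.val).card from rfl]
      congr 1
      apply Multiset.filter_congr
      intro i _
      exact ⟨fun h => h.symm, fun h => h.symm⟩
    rw [e s, e s', hcount]
  -- list permutation
  have hperm : List.Perm (List.ofFn s) (List.ofFn s') := by
    rw [← Multiset.coe_eq_coe]
    simpa [Fin.univ_val_map] using hms
  -- linear order on S, sort
  letI : LinearOrder S := linearOrderOfSTO WellOrderingRel
  have h1 : List.Perm (List.ofFn (s ∘ Tuple.sort s)) (List.ofFn (s' ∘ Tuple.sort s')) :=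
    ((Tuple.sort s).ofFn_comp_perm s).trans
      (hperm.trans ((Tuple.sort s').ofFn_comp_perm s').symm)
  have heq : s ∘ Tuple.sort s = s' ∘ Tuple.sort s' := by
    apply List.ofFn_injective
    exact List.Perm.eq_of_sortedLE
      (Tuple.monotone_sort s).sortedLE_ofFn (Tuple.monotone_sort s').sortedLE_ofFn h1
  refine ⟨(Tuple.sort s').symm.trans (Tuple.sort s), fun i => ?_⟩
  have := congrFun heq ((Tuple.sort s').symm i)
  simpa using this.symm
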